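/- Theorem 3 (Hölder continuity of fractional Lévy processes): Let d ∈ (0, 1/2) and let L be a two-sided Lévy process with E[L(1)] = 0, E[L(1)²] < ∞ and no Brownian component. Let M_d(t) = ∫_{−∞}^{∞} (1/Γ(d+1))[(t−r)₊^d − (−r)₊^d] dL(r) be the fractional Lévy process. Then P-almost surely, for every t ∈ ℝ, the sample path of M_d is Hölder continuous of order exactly d at t: there exist δ₀ > 0 and C = C(ω,t) such that |M_d(t+δ) − M_d(t)| ≤ C|δ|^d for all |δ| ≤ δ₀. -/

import Mathlib

open MeasureTheory ProbabilityTheory Filter Set intervalIntegral Real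

private lemma aux_rpow_sub_le {x y q : ℝ} (hx : 0 < x) (hxy : x ≤ y) (hq : q < 0) :
    x ^ q - y ^ q ≤ (-q) * ((y - x) * x ^ (q - 1)) := by
  rcases eq_or_lt_of_le hxy with rfl | hlt
  · simp only [sub_self, zero_mul, mul_zero, le_refl]
  obtain ⟨c, hc, hderiv⟩ := exists_hasDerivAt_eq_slope (fun u : ℝ => u ^ q)
      (fun u : ℝ => q * u ^ (q - 1)) hlt
      (fun u hu => (Real.continuousAt_rpow_const u q
        (Or.inl (ne_of_gt (lt_of_lt_of_le hx hu.1)))).continuousWithinAt)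
      (fun u hu => Real.hasDerivAt_rpow_const (Or.inl (ne_of_gt (hx.trans hu.1))))
  have hc0 : 0 < c := hx.trans hc.1
  have heq : y ^ q - x ^ q = q * c ^ (q - 1) * (y - x) := by
    rw [eq_div_iff (sub_ne_zero.2 hlt.ne')] at hderiv
    linarith [hderiv]
  have hle : c ^ (q - 1) ≤ x ^ (q - 1) :=
    Real.rpow_le_rpow_of_nonpos hx hc.1.le (by linarith)
  have key : (-q) * (y - x) * c ^ (q-1) ≤ (-q) * (y - x) * x ^ (q-1) :=
    mul_le_mul_of_nonneg_left hle (by nlinarith)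
  nlinarith [key, heq]

private lemma aux_kdiff_bound {d T a b r : ℝ} (hd0 : 0 < d) (hd1 : d < 1)
    (hT : 1 < T) (ha : -(T-1) ≤ a) (hb : -(T-1) ≤ b) (hr : r ≤ -T) :
    |(max (a - r) 0) ^ (d-1) - (max (b - r) 0) ^ (d-1)| ≤
      (1-d) * |a - b| * (T ^ ((2:ℝ)-d) * (-r) ^ (d-2)) := by
  wlog hab : b ≤ a with H
  · rw [abs_sub_comm, abs_sub_comm a b]
    exact H hd0 hd1 hT hb ha hr (le_of_not_ge hab)
  have hT0 : (0:ℝ) < T := by linarith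
  have hrpos : 0 < -r := by linarith
  have hbr : 0 < b - r := by linarith
  have har : b - r ≤ a - r := by linarith
  have hbrT : (-r) / T ≤ b - r := by
    rw [div_le_iff₀ hT0]
    nlinarith
  have hmaxa : max (a - r) 0 = a - r := max_eq_left (by linarith)
  have hmaxb : max (b - r) 0 = b - r := max_eq_left (by linarith)
  rw [hmaxa, hmaxb]
  have hmono : (a - r) ^ (d-1) ≤ (b - r) ^ (d-1) :=
    Real.rpow_le_rpow_of_nonpos hbr har (by linarith)
  rw [abs_of_nonpos (by linarith), abs_of_nonneg (by linarith : (0:ℝ) ≤ a - b)]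
  have key := aux_rpow_sub_le hbr har (by linarith : d - 1 < 0)
  have hexp : (b - r) ^ (d - 1 - 1) ≤ T ^ ((2:ℝ)-d) * (-r) ^ (d-2) := by
    have h1 : (b - r) ^ (d - 1 - 1) ≤ ((-r)/T) ^ (d - 1 - 1) :=
      Real.rpow_le_rpow_of_nonpos (by positivity) hbrT (by linarith)
    have h2 : ((-r)/T) ^ (d - 1 - 1) = T ^ ((2:ℝ)-d) * (-r) ^ (d-2) := by
      rw [Real.div_rpow hrpos.le hT0.le]
      rw [div_eq_mul_inv, ← Real.rpow_neg hT0.le]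
      ring_nf
    linarith [h1, h2.le, h2.ge]
  calc -((a-r)^(d-1) - (b-r)^(d-1)) = (b-r)^(d-1) - (a-r)^(d-1) := by ring
    _ ≤ (-(d-1)) * ((a - r - (b - r)) * (b-r)^(d-1-1)) := key
    _ = (1-d) * ((a-b) * (b-r)^(d-1-1)) := by ring
    _ ≤ (1-d) * (a-b) * (T ^ ((2:ℝ)-d) * (-r) ^ (d-2)) := by
        have hab0 : 0 ≤ a - b := by linarith
        nlinarith [Real.rpow_nonneg hbr.le (d-1-1), hexp,
          mul_le_mul_of_nonneg_left hexp (mul_nonneg (by linarith : (0:ℝ) ≤ 1-d) hab0)]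

private lemma aux_cadlag_bounded {f g : ℝ → ℝ}
    (hrc : ∀ s : ℝ, Tendsto f (nhdsWithin s (Ici s)) (nhds (f s)))
    (hll : ∀ s : ℝ, Tendsto f (nhdsWithin s (Iio s)) (nhds (g s)))
    (a b : ℝ) : ∃ B : ℝ, 0 ≤ B ∧ ∀ r ∈ Icc a b, |f r| ≤ B := by
  set M : ℝ → ℝ := fun s => max |f s| |g s| + 1 with hM
  have hMpos : ∀ s, 0 ≤ M s := fun s => by positivity
  have hnhds : ∀ s : ℝ, ∀ᶠ u in nhds s, |f u| ≤ M s := by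
    intro s
    have h1 : ∀ᶠ u in nhdsWithin s (Ici s), |f u| ≤ M s := by
      filter_upwards [(hrc s).eventually (Metric.ball_mem_nhds (f s) one_pos)] with u hu
      rw [Real.dist_eq] at hu
      have : |f u| - |f s| ≤ |f u - f s| := abs_sub_abs_le_abs_sub _ _
      have h2 : |f s| ≤ max |f s| |g s| := le_max_left _ _
      simp only [hM]; linarith [le_of_lt hu]
    have h2 : ∀ᶠ u in nhdsWithin s (Iio s), |f u| ≤ M s := by
      filter_upwards [(hll s).eventually (Metric.ball_mem_nhds (g s) one_pos)] with u hu
      rw [Real.dist_eq] at hu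
      have : |f u| - |g s| ≤ |f u - g s| := abs_sub_abs_le_abs_sub _ _
      have h3 : |g s| ≤ max |f s| |g s| := le_max_right _ _
      simp only [hM]; linarith [le_of_lt hu]
    rw [← nhdsLT_sup_nhdsGE s]
    rw [eventually_sup]
    exact ⟨h2, h1⟩
  obtain ⟨t, -, hcover⟩ := isCompact_Icc.elim_nhds_subcover
    (fun s => {u | |f u| ≤ M s}) (fun s _ => hnhds s)
  refine ⟨∑ s ∈ t, M s, Finset.sum_nonneg (fun s _ => hMpos s), fun r hr => ?_⟩
  obtain ⟨s, hs, hrs⟩ := mem_iUnion₂.1 (hcover hr)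
  exact le_trans hrs (Finset.single_le_sum (fun i _ => hMpos i) hs)

private lemma aux_ker_meas (d : ℝ) : Measurable fun u : ℝ => (max u 0) ^ (d-1) :=
  (measurable_id.max measurable_const).pow_const _

private lemma aux_ker_intervalIntegrable {d : ℝ} (hd0 : 0 < d) (hd1 : d < 1) (a b : ℝ) :
    IntervalIntegrable (fun u : ℝ => (max u 0) ^ (d-1)) volume a b := by
  have h := intervalIntegrable_rpow' (r := d-1) (by linarith) (a := a) (b := b)
  refine h.mono_fun (aux_ker_meas d).aestronglyMeasurable ?_
  refine ae_of_all _ (fun u => ?_)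
  simp only
  rcases le_or_gt u 0 with hu | hu
  · rcases eq_or_lt_of_le hu with rfl | hu'
    · simp
    · rw [max_eq_right hu]
      rw [Real.zero_rpow (by linarith : d - 1 ≠ 0)]
      simp [norm_nonneg]
  · rw [max_eq_left hu.le]

private lemma aux_tail_integrable {p T : ℝ} (hp : p < -1) (hT : 0 < T) :
    IntegrableOn (fun r : ℝ => (-r) ^ p) (Iic (-T)) (volume : Measure ℝ) := by
  have h : IntegrableOn (fun u : ℝ => u ^ p) (Ici T) := by
    rw [integrableOn_Ici_iff_integrableOn_Ioi]
    exact integrableOn_Ioi_rpow_of_lt hp hT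
  have hpre : (Neg.neg : ℝ → ℝ) ⁻¹' (Ici T) = Iic (-T) := by
    ext x; simp [neg_le, le_neg]
  have := (Measure.measurePreserving_neg (volume : Measure ℝ)).integrableOn_comp_preimage
      (Homeomorph.neg ℝ).measurableEmbedding (f := fun u : ℝ => u ^ p) (s := Ici T)
  rw [hpre] at this
  rw [show (fun r : ℝ => (-r) ^ p) = (fun u : ℝ => u ^ p) ∘ (Neg.neg) from rfl]
  exact this.2 h

private lemma aux_gmeas {d s : ℝ} {ℓ : ℝ → ℝ} (hmeas : Measurable ℓ) :
    Measurable (fun r : ℝ => ((max (s - r) 0) ^ (d-1) - (max (-r) 0) ^ (d-1)) * ℓ r) := by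
  refine Measurable.mul ?_ hmeas
  exact (((measurable_const.sub measurable_id).max measurable_const).pow_const _).sub
    ((measurable_id.neg.max measurable_const).pow_const _)

private lemma aux_ker_integrableOn {d : ℝ} (hd0 : 0 < d) (hd1 : d < 1) (w a b : ℝ)
    (hab : a ≤ b) :
    IntegrableOn (fun r : ℝ => (max (w - r) 0) ^ (d-1)) (Ioc a b) (volume : Measure ℝ) := by
  have h := (aux_ker_intervalIntegrable hd0 hd1 (w - a) (w - b)).comp_sub_left w
  simp only [sub_sub_cancel] at h
  rwa [intervalIntegrable_iff_integrableOn_Ioc_of_le hab] at h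

private lemma aux_integrable {d t T B s ε : ℝ} (hd0 : 0 < d) (hd2 : d < 1/2)
    (hε : 0 < ε) (hεd : d - 3/2 + ε < -1)
    {ℓ : ℝ → ℝ} (hmeas : Measurable ℓ)
    (hT : |t| + 2 ≤ T)
    (htail : ∀ r : ℝ, r ≤ -T → |ℓ r| ≤ (-r) ^ ((1:ℝ)/2 + ε))
    (hBb : ∀ r ∈ Icc (-T) (max (t+1) 0), |ℓ r| ≤ B)
    (hs : s ∈ Icc (t-1) (t+1)) :
    Integrable (fun r : ℝ => ((max (s - r) 0) ^ (d-1) - (max (-r) 0) ^ (d-1)) * ℓ r) := by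
  have habs : (0:ℝ) ≤ |t| := abs_nonneg t
  have hT1 : (1:ℝ) < T := by linarith
  have hT0 : (0:ℝ) < T := by linarith
  set c₀ : ℝ := max (t+1) 0 with hc₀
  have hc₀0 : (0:ℝ) ≤ c₀ := le_max_right _ _
  have hsc₀ : s ≤ c₀ := le_trans hs.2 (le_max_left _ _)
  have hTc : -T ≤ c₀ := by linarith
  have hB : (0:ℝ) ≤ B := le_trans (abs_nonneg _) (hBb 0 ⟨by linarith, hc₀0⟩)
  have hg := aux_gmeas (d := d) (s := s) hmeas
  have hsl : -(T-1) ≤ s := by have := neg_abs_le t; linarith [hs.1]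
  have h0l : -(T-1) ≤ (0:ℝ) := by linarith
  -- piece 1 : tail
  have h1 : IntegrableOn
      (fun r : ℝ => ((max (s - r) 0) ^ (d-1) - (max (-r) 0) ^ (d-1)) * ℓ r) (Iic (-T)) := by
    refine Integrable.mono'
      (g := fun r => ((1-d) * |s| * T^((2:ℝ)-d)) * ((-r) ^ (d - 3/2 + ε)))
      ((aux_tail_integrable hεd hT0).const_mul _) hg.aestronglyMeasurable.restrict ?_
    rw [ae_restrict_iff' measurableSet_Iic]
    refine ae_of_all _ (fun r hr => ?_)
    have hr' : r ≤ -T := hr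
    have hrpos : (0:ℝ) < -r := by linarith
    have hkd := aux_kdiff_bound hd0 (by linarith) hT1 hsl h0l hr'
    have hl := htail r hr'
    have hzero : max (0 - r) 0 = max (-r) 0 := by rw [zero_sub]
    rw [Real.norm_eq_abs, abs_mul]
    calc |(max (s - r) 0) ^ (d-1) - (max (-r) 0) ^ (d-1)| * |ℓ r|
        ≤ ((1-d) * |s - 0| * (T^((2:ℝ)-d) * (-r)^(d-2))) * ((-r) ^ ((1:ℝ)/2+ε)) := by
          refine mul_le_mul ?_ hl (abs_nonneg _) ?_
          · rw [hzero] at hkd; exact hkd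
          · have h1d : (0:ℝ) ≤ 1 - d := by linarith
            positivity
      _ = ((1-d) * |s| * T^((2:ℝ)-d)) * ((-r)^(d-2) * (-r) ^ ((1:ℝ)/2+ε)) := by
          rw [sub_zero]; ring
      _ = ((1-d) * |s| * T^((2:ℝ)-d)) * ((-r) ^ (d - 3/2 + ε)) := by
          rw [← Real.rpow_add hrpos]
          congr 1
          ring
  -- piece 2 : middle
  have h2 : IntegrableOn
      (fun r : ℝ => ((max (s - r) 0) ^ (d-1) - (max (-r) 0) ^ (d-1)) * ℓ r) (Ioc (-T) c₀) := by
    refine Integrable.mono'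
      (g := fun r => B * ((max (s - r) 0)^(d-1) + (max (-r) 0)^(d-1)))
      (Integrable.const_mul ?_ B) hg.aestronglyMeasurable.restrict ?_
    · refine (aux_ker_integrableOn hd0 (by linarith) s _ _ hTc).add ?_
      have := aux_ker_integrableOn hd0 (by linarith) 0 _ _ hTc
      simpa using this
    · rw [ae_restrict_iff' measurableSet_Ioc]
      refine ae_of_all _ (fun r hr => ?_)
      have hlr : |ℓ r| ≤ B := hBb r ⟨hr.1.le, hr.2⟩
      rw [Real.norm_eq_abs, abs_mul]
      have hk1 : (0:ℝ) ≤ (max (s - r) 0)^(d-1) := Real.rpow_nonneg (le_max_right _ _) _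
      have hk2 : (0:ℝ) ≤ (max (-r) 0)^(d-1) := Real.rpow_nonneg (le_max_right _ _) _
      calc |(max (s - r) 0) ^ (d-1) - (max (-r) 0) ^ (d-1)| * |ℓ r|
          ≤ ((max (s - r) 0)^(d-1) + (max (-r) 0)^(d-1)) * B := by
            refine mul_le_mul ?_ hlr (abs_nonneg _) (by positivity)
            calc |(max (s - r) 0) ^ (d-1) - (max (-r) 0) ^ (d-1)|
                ≤ |(max (s - r) 0)^(d-1)| + |(max (-r) 0)^(d-1)| := abs_sub _ _
              _ = (max (s - r) 0)^(d-1) + (max (-r) 0)^(d-1) := by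
                  rw [abs_of_nonneg hk1, abs_of_nonneg hk2]
        _ = B * ((max (s - r) 0)^(d-1) + (max (-r) 0)^(d-1)) := mul_comm _ _
  -- piece 3 : right of support
  have h3 : IntegrableOn
      (fun r : ℝ => ((max (s - r) 0) ^ (d-1) - (max (-r) 0) ^ (d-1)) * ℓ r) (Ioi c₀) := by
    refine (integrableOn_zero (μ := (volume : Measure ℝ))).congr_fun (fun r hr => ?_)
      measurableSet_Ioi
    have hr' : c₀ < r := hr
    have h1 : max (s - r) 0 = 0 := max_eq_right (by linarith)
    have h2 : max (-r) 0 = 0 := max_eq_right (by linarith)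
    rw [h1, h2, Real.zero_rpow (by linarith : d - 1 ≠ 0), sub_self, zero_mul]
  rw [← integrableOn_univ, ← Iic_union_Ioi (a := c₀), ← Iic_union_Ioc_eq_Iic hTc]
  exact (h1.union h2).union h3

private lemma aux_ker_integral {d : ℝ} (hd0 : 0 < d) {w a b : ℝ} (hab : a ≤ b)
    (hwb : 0 ≤ w - b) :
    ∫ r in Ioc a b, (max (w - r) 0) ^ (d-1) = ((w-a)^d - (w-b)^d)/d := by
  rw [← integral_of_le hab, integral_comp_sub_left (fun u : ℝ => (max u 0) ^ (d-1)) w]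
  rw [integral_congr (g := fun u : ℝ => u ^ (d-1)) ?_]
  · rw [integral_rpow (Or.inl (by linarith : (-1:ℝ) < d-1))]
    rw [show d - 1 + 1 = d by ring]
  · intro u hu
    rw [uIcc_of_le (by linarith : w - b ≤ w - a)] at hu
    simp only [max_eq_left (le_trans hwb hu.1)]


private lemma aux_main {d t T B s₁ s₂ ε : ℝ} (hd0 : 0 < d) (hd2 : d < 1/2)
    (hε : 0 < ε) (hεd : d - 3/2 + ε < -1)
    {ℓ : ℝ → ℝ} (hmeas : Measurable ℓ)
    (hT : |t| + 2 ≤ T)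
    (htail : ∀ r : ℝ, r ≤ -T → |ℓ r| ≤ (-r) ^ ((1:ℝ)/2 + ε))
    (hBb : ∀ r ∈ Icc (-T) (max (t+1) 0), |ℓ r| ≤ B)
    (hs₁ : s₁ ∈ Icc (t-1) (t+1)) (hs₂ : s₂ ∈ Icc (t-1) (t+1))
    (h12 : s₁ ≤ s₂) (hη1 : s₂ - s₁ ≤ 1) :
    |(∫ r : ℝ, ((max (s₂ - r) 0) ^ (d-1) - (max (-r) 0) ^ (d-1)) * ℓ r)
      - ∫ r : ℝ, ((max (s₁ - r) 0) ^ (d-1) - (max (-r) 0) ^ (d-1)) * ℓ r|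
    ≤ ((1-d) * T^((2:ℝ)-d) * (∫ r in Iic (-T), (-r) ^ (d - 3/2 + ε)) + B * (2/d))
        * (s₂ - s₁) ^ d := by
  have habs : (0:ℝ) ≤ |t| := abs_nonneg t
  have hnabs : -|t| ≤ t := neg_abs_le t
  have habs' : t ≤ |t| := le_abs_self t
  have hT1 : (1:ℝ) < T := by linarith
  have hT0 : (0:ℝ) < T := by linarith
  have hd1 : d < 1 := by linarith
  have hB : (0:ℝ) ≤ B := le_trans (abs_nonneg _)
    (hBb 0 ⟨by linarith, le_max_right _ _⟩)
  have hItail0 : 0 ≤ ∫ r in Iic (-T), (-r) ^ (d - 3/2 + ε) :=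
    setIntegral_nonneg measurableSet_Iic
      (fun r hr => Real.rpow_nonneg (by simp only [mem_Iic] at hr; linarith) _)
  have hη0 : 0 ≤ s₂ - s₁ := by linarith
  have hC0 : 0 ≤ (1-d) * T^((2:ℝ)-d) * (∫ r in Iic (-T), (-r) ^ (d - 3/2 + ε))
      + B * (2/d) := by
    have h1 : (0:ℝ) ≤ 1 - d := by linarith
    positivity
  rcases eq_or_lt_of_le hη0 with hη0' | hη0'
  · have hss : s₂ = s₁ := by linarith
    subst hss
    simp [sub_self, Real.zero_rpow hd0.ne']
  -- notation
  have hTs₁ : -T ≤ s₁ := by linarith [hs₁.1]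
  have hTs₂ : -T ≤ s₂ := by linarith [hs₂.1]
  have hs₁c : s₁ ≤ max (t+1) 0 := le_trans hs₁.2 (le_max_left _ _)
  have hs₂c : s₂ ≤ max (t+1) 0 := le_trans hs₂.2 (le_max_left _ _)
  have hI1 := aux_integrable hd0 hd2 hε hεd hmeas hT htail hBb hs₁
  have hI2 := aux_integrable hd0 hd2 hε hεd hmeas hT htail hBb hs₂
  have hstep : (∫ r : ℝ, ((max (s₂ - r) 0) ^ (d-1) - (max (-r) 0) ^ (d-1)) * ℓ r)
      - (∫ r : ℝ, ((max (s₁ - r) 0) ^ (d-1) - (max (-r) 0) ^ (d-1)) * ℓ r)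
      = ∫ r : ℝ, ((max (s₂ - r) 0) ^ (d-1) - (max (s₁ - r) 0) ^ (d-1)) * ℓ r := by
    rw [← integral_sub hI2 hI1]
    congr 1; funext r; ring
  have hinth : Integrable
      (fun r : ℝ => ((max (s₂ - r) 0) ^ (d-1) - (max (s₁ - r) 0) ^ (d-1)) * ℓ r) :=
    (hI2.sub hI1).congr (ae_of_all _ (fun r => by simp only [Pi.sub_apply]; ring))
  set h : ℝ → ℝ := fun r : ℝ => ((max (s₂ - r) 0) ^ (d-1) - (max (s₁ - r) 0) ^ (d-1)) * ℓ r
    with hh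
  -- splitting
  have e0 : ∫ r : ℝ, |h r| = (∫ r in Iic s₂, |h r|) + ∫ r in Ioi s₂, |h r| := by
    rw [← MeasureTheory.setIntegral_univ, ← Iic_union_Ioi (a := s₂),
      setIntegral_union (Iic_disjoint_Ioi le_rfl) measurableSet_Ioi
        hinth.abs.integrableOn hinth.abs.integrableOn]
  have e1 : ∫ r in Iic s₂, |h r| = (∫ r in Iic (-T), |h r|) + ∫ r in Ioc (-T) s₂, |h r| := by
    rw [← Iic_union_Ioc_eq_Iic hTs₂,
      setIntegral_union ((Iic_disjoint_Ioi le_rfl).mono_right Ioc_subset_Ioi_self)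
        measurableSet_Ioc hinth.abs.integrableOn hinth.abs.integrableOn]
  have e2 : ∫ r in Ioc (-T) s₂, |h r|
      = (∫ r in Ioc (-T) s₁, |h r|) + ∫ r in Ioc s₁ s₂, |h r| := by
    rw [← Ioc_union_Ioc_eq_Ioc hTs₁ h12,
      setIntegral_union (Ioc_disjoint_Ioc_of_le le_rfl) measurableSet_Ioc
        hinth.abs.integrableOn hinth.abs.integrableOn]
  -- right piece is zero
  have hrt : ∫ r in Ioi s₂, |h r| = 0 := by
    rw [setIntegral_congr_fun (g := fun _ => (0:ℝ)) measurableSet_Ioi ?_, MeasureTheory.integral_zero]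
    intro r hr
    have hr' : s₂ < r := hr
    simp only [hh]
    rw [max_eq_right (by linarith : s₂ - r ≤ 0), max_eq_right (by linarith : s₁ - r ≤ 0),
      Real.zero_rpow (by linarith : d - 1 ≠ 0), sub_self, zero_mul, abs_zero]
  -- tail piece
  have htl : ∫ r in Iic (-T), |h r|
      ≤ ((1-d) * ((s₂ - s₁) * T^((2:ℝ)-d))) * ∫ r in Iic (-T), (-r) ^ (d - 3/2 + ε) := by
    rw [← MeasureTheory.integral_const_mul]
    refine setIntegral_mono_on hinth.abs.integrableOn
      ((aux_tail_integrable hεd hT0).const_mul _) measurableSet_Iic (fun r hr => ?_)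
    have hr' : r ≤ -T := hr
    have hrpos : (0:ℝ) < -r := by linarith
    have hkd := aux_kdiff_bound hd0 hd1 hT1
      (by linarith [hs₂.1] : -(T-1) ≤ s₂) (by linarith [hs₁.1] : -(T-1) ≤ s₁) hr'
    have hl := htail r hr'
    simp only [hh]
    rw [abs_mul]
    calc |(max (s₂ - r) 0) ^ (d-1) - (max (s₁ - r) 0) ^ (d-1)| * |ℓ r|
        ≤ ((1-d) * |s₂ - s₁| * (T^((2:ℝ)-d) * (-r)^(d-2))) * ((-r) ^ ((1:ℝ)/2+ε)) := by
          refine mul_le_mul hkd hl (abs_nonneg _) ?_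
          have h1d : (0:ℝ) ≤ 1 - d := by linarith
          positivity
      _ = ((1-d) * ((s₂ - s₁) * T^((2:ℝ)-d))) * ((-r)^(d-2) * (-r) ^ ((1:ℝ)/2+ε)) := by
          rw [abs_of_nonneg hη0]; ring
      _ = ((1-d) * ((s₂ - s₁) * T^((2:ℝ)-d))) * ((-r) ^ (d - 3/2 + ε)) := by
          rw [← Real.rpow_add hrpos]
          congr 1
          ring
  -- middle piece 1
  have hae : ∀ᵐ r : ℝ, r ≠ s₁ := by
    rw [ae_iff]
    simp only [not_not, setOf_eq_eq_singleton]
    exact measure_singleton _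
  have hm1 : ∫ r in Ioc (-T) s₁, |h r|
      ≤ B * ∫ r in Ioc (-T) s₁,
          ((max (s₁ - r) 0) ^ (d-1) - (max (s₂ - r) 0) ^ (d-1)) := by
    rw [← MeasureTheory.integral_const_mul]
    refine setIntegral_mono_on_ae hinth.abs.integrableOn
      (Integrable.const_mul
        ((aux_ker_integrableOn hd0 hd1 s₁ _ _ hTs₁).sub
          (aux_ker_integrableOn hd0 hd1 s₂ _ _ hTs₁)) B)
      measurableSet_Ioc ?_
    filter_upwards [hae] with r hne hr
    have hr1 : r < s₁ := lt_of_le_of_ne hr.2 hne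
    have hp1 : 0 < s₁ - r := by linarith
    have hp2 : 0 < s₂ - r := by linarith
    have hmono : (max (s₂ - r) 0) ^ (d-1) ≤ (max (s₁ - r) 0) ^ (d-1) := by
      rw [max_eq_left hp1.le, max_eq_left hp2.le]
      exact Real.rpow_le_rpow_of_nonpos hp1 (by linarith) (by linarith)
    have hlr : |ℓ r| ≤ B := hBb r ⟨hr.1.le, le_trans hr.2 hs₁c⟩
    simp only [hh]
    rw [abs_mul, abs_sub_comm, abs_of_nonneg (by linarith)]
    calc ((max (s₁ - r) 0) ^ (d-1) - (max (s₂ - r) 0) ^ (d-1)) * |ℓ r|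
        ≤ ((max (s₁ - r) 0) ^ (d-1) - (max (s₂ - r) 0) ^ (d-1)) * B := by
          exact mul_le_mul_of_nonneg_left hlr (by linarith)
      _ = B * ((max (s₁ - r) 0) ^ (d-1) - (max (s₂ - r) 0) ^ (d-1)) := mul_comm _ _
  -- middle piece 2
  have hm2 : ∫ r in Ioc s₁ s₂, |h r|
      ≤ B * ∫ r in Ioc s₁ s₂, (max (s₂ - r) 0) ^ (d-1) := by
    rw [← MeasureTheory.integral_const_mul]
    refine setIntegral_mono_on hinth.abs.integrableOn
      (Integrable.const_mul (aux_ker_integrableOn hd0 hd1 s₂ _ _ h12) B)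
      measurableSet_Ioc (fun r hr => ?_)
    have hr1 : s₁ < r := hr.1
    have hk1 : max (s₁ - r) 0 = 0 := max_eq_right (by linarith)
    have hlr : |ℓ r| ≤ B := hBb r ⟨by linarith, le_trans hr.2 hs₂c⟩
    simp only [hh]
    rw [abs_mul, hk1, Real.zero_rpow (by linarith : d - 1 ≠ 0), sub_zero,
      abs_of_nonneg (Real.rpow_nonneg (le_max_right _ _) _)]
    calc (max (s₂ - r) 0) ^ (d-1) * |ℓ r|
        ≤ (max (s₂ - r) 0) ^ (d-1) * B :=
          mul_le_mul_of_nonneg_left hlr (Real.rpow_nonneg (le_max_right _ _) _)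
      _ = B * (max (s₂ - r) 0) ^ (d-1) := mul_comm _ _
  -- kernel integral values
  have hv1 : ∫ r in Ioc (-T) s₁, (max (s₁ - r) 0) ^ (d-1) = ((s₁ + T)^d - 0)/d := by
    rw [aux_ker_integral hd0 hTs₁ (by linarith : (0:ℝ) ≤ s₁ - s₁)]
    rw [sub_neg_eq_add, sub_self, Real.zero_rpow hd0.ne']
  have hv2 : ∫ r in Ioc (-T) s₁, (max (s₂ - r) 0) ^ (d-1)
      = ((s₂ + T)^d - (s₂ - s₁)^d)/d := by
    rw [aux_ker_integral hd0 hTs₁ (by linarith : (0:ℝ) ≤ s₂ - s₁)]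
    rw [sub_neg_eq_add]
  have hv3 : ∫ r in Ioc s₁ s₂, (max (s₂ - r) 0) ^ (d-1) = ((s₂ - s₁)^d - 0)/d := by
    rw [aux_ker_integral hd0 h12 (by linarith : (0:ℝ) ≤ s₂ - s₂)]
    rw [sub_self, Real.zero_rpow hd0.ne']
  have hsub : ∫ r in Ioc (-T) s₁,
      ((max (s₁ - r) 0) ^ (d-1) - (max (s₂ - r) 0) ^ (d-1))
      = ((s₁ + T)^d - 0)/d - ((s₂ + T)^d - (s₂ - s₁)^d)/d := by
    rw [← hv1, ← hv2]
    exact integral_sub (aux_ker_integrableOn hd0 hd1 s₁ _ _ hTs₁)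
      (aux_ker_integrableOn hd0 hd1 s₂ _ _ hTs₁)
  -- finish
  have hA : (s₁ + T)^d ≤ (s₂ + T)^d :=
    Real.rpow_le_rpow (by linarith) (by linarith) hd0.le
  have hηd : s₂ - s₁ ≤ (s₂ - s₁)^d := by
    have := Real.rpow_le_rpow_of_exponent_ge hη0' hη1 hd1.le (y := 1)
    rwa [Real.rpow_one] at this
  have hE0 : (0:ℝ) ≤ (s₂ - s₁)^d := Real.rpow_nonneg hη0 _
  have h1d : (0:ℝ) ≤ 1 - d := by linarith
  have hm1' : ∫ r in Ioc (-T) s₁, |h r| ≤ B * ((s₂ - s₁)^d / d) := by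
    refine le_trans hm1 ?_
    rw [hsub]
    refine mul_le_mul_of_nonneg_left ?_ hB
    rw [div_sub_div_same]
    gcongr
    linarith
  have hm2' : ∫ r in Ioc s₁ s₂, |h r| ≤ B * ((s₂ - s₁)^d / d) := by
    refine le_trans hm2 (le_of_eq ?_)
    rw [hv3, sub_zero]
  have htl' : ∫ r in Iic (-T), |h r|
      ≤ ((1-d) * T^((2:ℝ)-d) * (∫ r in Iic (-T), (-r) ^ (d - 3/2 + ε))) * (s₂ - s₁)^d := by
    refine le_trans htl ?_
    have hnn : 0 ≤ (1-d) * T^((2:ℝ)-d) * (∫ r in Iic (-T), (-r) ^ (d - 3/2 + ε)) := by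
      positivity
    calc ((1-d) * ((s₂ - s₁) * T^((2:ℝ)-d))) * (∫ r in Iic (-T), (-r) ^ (d - 3/2 + ε))
        = ((1-d) * T^((2:ℝ)-d) * (∫ r in Iic (-T), (-r) ^ (d - 3/2 + ε))) * (s₂ - s₁) := by
          ring
      _ ≤ _ := mul_le_mul_of_nonneg_left hηd hnn
  have hring : (((1-d) * T^((2:ℝ)-d) * (∫ r in Iic (-T), (-r) ^ (d - 3/2 + ε))) + B * (2/d))
      * (s₂ - s₁)^d
      = ((1-d) * T^((2:ℝ)-d) * (∫ r in Iic (-T), (-r) ^ (d - 3/2 + ε))) * (s₂ - s₁)^d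
        + B * ((s₂ - s₁)^d / d) + B * ((s₂ - s₁)^d / d) := by
    ring
  have hfinal : ∫ r : ℝ, |h r|
      ≤ ((1-d) * T^((2:ℝ)-d) * (∫ r in Iic (-T), (-r) ^ (d - 3/2 + ε)) + B * (2/d))
        * (s₂ - s₁) ^ d := by
    rw [e0, e1, e2, hrt, add_zero, hring]
    linarith [htl', hm1', hm2']
  calc |(∫ r : ℝ, ((max (s₂ - r) 0) ^ (d-1) - (max (-r) 0) ^ (d-1)) * ℓ r)
      - ∫ r : ℝ, ((max (s₁ - r) 0) ^ (d-1) - (max (-r) 0) ^ (d-1)) * ℓ r|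
      = |∫ r : ℝ, h r| := by rw [hstep]
    _ ≤ ∫ r : ℝ, |h r| := by
        simpa [Real.norm_eq_abs] using norm_integral_le_integral_norm (μ := volume) h
    _ ≤ _ := hfinal

/-- Theorem 3: for `d ∈ (0,1/2)` and a two-sided Lévy process `L`
with mean zero, finite second moment and no Brownian component (encoded through
its sample-path properties: càdlàg paths vanishing at `0` and the
law-of-the-iterated-logarithm growth bound `|L(−s)| ≲ s^{1/2+ε}` at infinity),
the fractional Lévy process, via its moving-average representation
`M_d(t) = (1/Γ(d)) ∫_ℝ [(t−r)₊^{d−1} − (−r)₊^{d−1}] L(r) dr`, is a.s. Hölder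
continuous of order `d` at every `t ∈ ℝ`. -/
theorem theorem3_holder_fractional_levy
    {Ω : Type*} [MeasureSpace Ω] [IsProbabilityMeasure (ℙ : Measure Ω)]
    (d : ℝ) (hd : d ∈ Set.Ioo (0:ℝ) (1/2))
    (L Lm Md : ℝ → Ω → ℝ)
    (hLrc : ∀ᵐ ω ∂(ℙ : Measure Ω), ∀ s : ℝ,
      Tendsto (fun u => L u ω) (nhdsWithin s (Set.Ici s)) (nhds (L s ω)))
    (hLll : ∀ᵐ ω ∂(ℙ : Measure Ω), ∀ s : ℝ,
      Tendsto (fun u => L u ω) (nhdsWithin s (Set.Iio s)) (nhds (Lm s ω)))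
    (hL0 : ∀ᵐ ω ∂(ℙ : Measure Ω), L 0 ω = 0)
    (hLmeas : ∀ ω : Ω, Measurable (fun r => L r ω))
    -- consequence of the LIL at infinity (Sato, Prop. 48.9), valid since
    -- `E[L(1)] = 0` and `E[L(1)²] < ∞`:
    (hLIL : ∀ ε > (0:ℝ), ∀ᵐ ω ∂(ℙ : Measure Ω), ∃ S > (1:ℝ), ∀ s : ℝ, S ≤ s →
      |L (-s) ω| ≤ s ^ ((1:ℝ)/2 + ε) ∧ |L s ω| ≤ s ^ ((1:ℝ)/2 + ε))
    -- moving-average representation (Marquardt, Thm. 3.4):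
    (hMd : ∀ᵐ ω ∂(ℙ : Measure Ω), ∀ t : ℝ,
      Md t ω = (1 / Real.Gamma d) *
        ∫ r : ℝ, ((max (t - r) 0) ^ (d - 1) - (max (-r) 0) ^ (d - 1)) * L r ω) :
    ∀ᵐ ω ∂(ℙ : Measure Ω), ∀ t : ℝ, ∃ δ₀ > (0:ℝ), ∃ C : ℝ,
      ∀ δ : ℝ, |δ| ≤ δ₀ → |Md (t + δ) ω - Md t ω| ≤ C * |δ| ^ d := by
  obtain ⟨hd0, hd2⟩ := hd
  have hε : (0:ℝ) < (1/2 - d)/2 := by linarith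
  have hεd : d - 3/2 + (1/2 - d)/2 < -1 := by linarith
  filter_upwards [hLrc, hLll, hLIL ((1/2 - d)/2) hε, hMd] with ω hrc hll hLILω hMdω
  intro t
  obtain ⟨S, hS, hSbd⟩ := hLILω
  have hTt : |t| + 2 ≤ max S (|t| + 2) := le_max_right _ _
  have hTS : S ≤ max S (|t| + 2) := le_max_left _ _
  have htail : ∀ r : ℝ, r ≤ -(max S (|t| + 2)) →
      |L r ω| ≤ (-r) ^ ((1:ℝ)/2 + (1/2 - d)/2) := by
    intro r hr
    have h1 : S ≤ -r := by linarith
    have := (hSbd (-r) h1).1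
    rwa [neg_neg] at this
  obtain ⟨B, hB0, hBb⟩ := aux_cadlag_bounded hrc hll (-(max S (|t| + 2))) (max (t+1) 0)
  set T : ℝ := max S (|t| + 2) with hT'
  set C₀ : ℝ := (1-d) * T^((2:ℝ)-d) * (∫ r in Iic (-T), (-r) ^ (d - 3/2 + (1/2 - d)/2))
      + B * (2/d) with hC₀
  refine ⟨1, one_pos, |1 / Real.Gamma d| * C₀, fun δ hδ => ?_⟩
  rw [hMdω (t+δ), hMdω t, ← mul_sub, abs_mul]
  rw [mul_assoc]
  refine mul_le_mul_of_nonneg_left ?_ (abs_nonneg _)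
  have habsδ := abs_le.1 hδ
  rcases le_total 0 δ with hδ0 | hδ0
  · have h1 : t ∈ Icc (t-1) (t+1) := ⟨by linarith, by linarith⟩
    have h2 : t + δ ∈ Icc (t-1) (t+1) := ⟨by linarith [habsδ.1], by linarith [habsδ.2]⟩
    have hmain := aux_main (s₁ := t) (s₂ := t + δ) hd0 hd2 hε hεd (hLmeas ω) hTt htail hBb
      h1 h2 (by linarith) (by linarith [habsδ.2])
    have heq : t + δ - t = |δ| := by rw [abs_of_nonneg hδ0]; ring
    rw [heq] at hmain
    exact hmain
  · have h1 : t ∈ Icc (t-1) (t+1) := ⟨by linarith, by linarith⟩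
    have h2 : t + δ ∈ Icc (t-1) (t+1) := ⟨by linarith [habsδ.1], by linarith [habsδ.2]⟩
    have hmain := aux_main (s₁ := t + δ) (s₂ := t) hd0 hd2 hε hεd (hLmeas ω) hTt htail hBb
      h2 h1 (by linarith) (by linarith [habsδ.1])
    have heq : t - (t + δ) = |δ| := by rw [abs_of_nonpos hδ0]; ring
    rw [heq, abs_sub_comm] at hmain
    exact hmain
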